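/- The infinite product Π_{i=1}^{∞} (1 + 1/c_i) converges to √((r+1)/(r−1)). -/

import Mathlib

theorem stmt19 (r : ℤ) (hr : 1 < r) (c : ℕ → ℤ)
    (hc0 : c 0 = 1) (hc1 : c 1 = r)
    (hc : ∀ n, c (n + 2) = 2 * (c (n + 1)) ^ 2 - 1) :
    Filter.Tendsto (fun n => ∏ i ∈ Finset.Icc 1 n, (1 + 1 / (c i : ℝ)))
      Filter.atTop (nhds (Real.sqrt (((r : ℝ) + 1) / ((r : ℝ) - 1)))) := by
  set L : ℝ := Real.sqrt (((r : ℝ) + 1) / ((r : ℝ) - 1)) with hL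
  have hr2 : (2 : ℤ) ≤ r := hr
  have hrR : (2 : ℝ) ≤ (r : ℝ) := by exact_mod_cast hr2
  -- growth of c
  have hgrow : ∀ n : ℕ, 1 ≤ n → (n : ℤ) + 1 ≤ c n := by
    intro n hn
    induction n, hn using Nat.le_induction with
    | base => simpa [hc1] using hr2
    | succ n hn ih =>
      have hrec : c (n + 1) = 2 * (c n) ^ 2 - 1 := by
        have := hc (n - 1)
        rwa [show n - 1 + 2 = n + 1 by omega, show n - 1 + 1 = n by omega] at this
      have : (1 : ℤ) ≤ n := by exact_mod_cast hn
      rw [hrec]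
      push_cast
      nlinarith [ih]
  have hcR : ∀ n : ℕ, 1 ≤ n → (n : ℝ) + 1 ≤ (c n : ℝ) := by
    intro n hn
    exact_mod_cast hgrow n hn
  -- the telescoping identity
  have key : ∀ n : ℕ, 1 ≤ n →
      ∏ i ∈ Finset.Icc 1 n, (1 + 1 / (c i : ℝ)) = L * Real.sqrt (1 - 1 / (c n : ℝ) ^ 2) := by
    intro n hn
    induction n, hn using Nat.le_induction with
    | base =>
      rw [Finset.Icc_self, Finset.prod_singleton, hc1, hL]
      have hrne : (r : ℝ) ≠ 0 := by linarith
      have hrm : (0 : ℝ) < (r : ℝ) - 1 := by linarith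
      rw [← Real.sqrt_mul (by positivity) (1 - 1 / (r : ℝ) ^ 2)]
      rw [show ((r : ℝ) + 1) / ((r : ℝ) - 1) * (1 - 1 / (r : ℝ) ^ 2)
            = (1 + 1 / (r : ℝ)) ^ 2 by field_simp; ring]
      rw [Real.sqrt_sq (by positivity)]
    | succ n hn ih =>
      have hrec : c (n + 1) = 2 * (c n) ^ 2 - 1 := by
        have := hc (n - 1)
        rwa [show n - 1 + 2 = n + 1 by omega, show n - 1 + 1 = n by omega] at this
      set x : ℝ := (c n : ℝ) with hx
      have hx1 : (1 : ℝ) < x := by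
        have := hcR n hn
        have : (1 : ℝ) ≤ (n : ℝ) := by exact_mod_cast hn
        linarith [hcR n hn]
      have hy : (c (n + 1) : ℝ) = 2 * x ^ 2 - 1 := by
        rw [hrec]; push_cast; ring
      have hypos : (0 : ℝ) < 2 * x ^ 2 - 1 := by nlinarith
      rw [Finset.prod_Icc_succ_top (by omega : 1 ≤ n + 1), ih, hy]
      have hxne : x ≠ 0 := by linarith
      have hyne : 2 * x ^ 2 - 1 ≠ 0 := ne_of_gt hypos
      have harg : 1 - 1 / (2 * x ^ 2 - 1) ^ 2
          = (1 - 1 / x ^ 2) * (1 + 1 / (2 * x ^ 2 - 1)) ^ 2 := by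
        field_simp
        ring
      rw [harg, Real.sqrt_mul (by
          have : 1 / x ^ 2 < 1 := by
            rw [div_lt_one (by positivity)]
            nlinarith
          linarith) ((1 + 1 / (2 * x ^ 2 - 1)) ^ 2),
        Real.sqrt_sq (by positivity)]
      ring
  -- limits
  have hct : Filter.Tendsto (fun n : ℕ => ((c n : ℝ)) ^ 2) Filter.atTop Filter.atTop := by
    apply Filter.tendsto_atTop_mono' Filter.atTop _ tendsto_natCast_atTop_atTop
    filter_upwards [Filter.eventually_ge_atTop 1] with n hn
    have h := hcR n hn
    nlinarith
  have h1 : Filter.Tendsto (fun n : ℕ => 1 / ((c n : ℝ)) ^ 2) Filter.atTop (nhds 0) := by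
    simp only [one_div]; exact hct.inv_tendsto_atTop
  have h2 : Filter.Tendsto (fun n : ℕ => 1 - 1 / ((c n : ℝ)) ^ 2) Filter.atTop (nhds 1) := by
    simpa using Filter.Tendsto.sub tendsto_const_nhds h1
  have h3 := (Real.continuous_sqrt.tendsto 1).comp h2
  rw [Real.sqrt_one] at h3
  have h4 : Filter.Tendsto (fun n : ℕ => L * Real.sqrt (1 - 1 / ((c n : ℝ)) ^ 2))
      Filter.atTop (nhds L) := by
    simpa using Filter.Tendsto.mul (tendsto_const_nhds (x := L)) h3
  apply h4.congr'
  filter_upwards [Filter.eventually_ge_atTop 1] with n hn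
  exact (key n hn).symm
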